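/- Let m be an odd positive integer, F = 𝔽_{2^m}, and let j < k be natural numbers with gcd(k − j, m) = 1. Then the function f : F → F given by f(x) = x^{2^k + 2^j} is crooked. In particular, the Gold function f(x) = x^{2^k + 1} with gcd(k, m) = 1 is crooked. -/

import Mathlib

private lemma powfix_mul {F : Type*} [Monoid F] (t : F) (a c : ℕ) (h : t ^ (2^a) = t) :
    t ^ (2^(a*c)) = t := by
  induction c with
  | zero => simp
  | succ c ih =>
    have he : 2 ^ (a*(c+1)) = 2 ^ (a*c) * 2 ^ a := by rw [← pow_add, Nat.mul_succ]
    rw [he, pow_mul, ih, h]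

private lemma powfix_gcd {F : Type*} [Monoid F] (t : F) (a b : ℕ) :
    t ^ (2^a) = t → t ^ (2^b) = t → t ^ (2^(Nat.gcd a b)) = t := by
  induction a, b using Nat.gcd.induction with
  | H0 n => intro _ hb; simpa using hb
  | H1 a b hpos ih =>
    intro ha hb
    rw [Nat.gcd_rec]
    apply ih _ ha
    have he : t ^ (2^b) = t ^ (2^(b % a)) := by
      conv_lhs => rw [← Nat.div_add_mod b a]
      rw [pow_add, pow_mul, powfix_mul t a (b / a) ha]
    rw [← he]; exact hb

/-- `f` is crooked: `f 0 = 0`; `f x + f y + f z ≠ f (x+y+z)` for pairwise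
distinct `x, y, z`; and `f x + f y + f z ≠ f (x+a) + f (y+a) + f (z+a)`
for every `a ≠ 0`. -/
def IsCrooked {F : Type*} [Field F] (f : F → F) : Prop :=
  f 0 = 0 ∧
  (∀ x y z : F, x ≠ y → x ≠ z → y ≠ z → f x + f y + f z ≠ f (x + y + z)) ∧
  (∀ x y z a : F, a ≠ 0 → f x + f y + f z ≠ f (x + a) + f (y + a) + f (z + a))

/-- For `j < k` with `gcd (k - j) m = 1`, the function `x ↦ x^(2^k + 2^j)` on
`𝔽_{2^m}` (`m` odd) is crooked; in particular the Gold function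
`x ↦ x^(2^k + 1)` with `gcd k m = 1` is crooked. -/


private lemma gold_core {m : ℕ} (hmodd : Odd m)
    {F : Type*} [Field F] [Fintype F] (hcard : Fintype.card F = 2 ^ m)
    [CharP F 2] (s : ℕ) (hsm : Nat.gcd s m = 1) :
    IsCrooked (fun x : F => x ^ (2 ^ s + 1)) := by
  have h2 : (2 : F) = 0 := by exact_mod_cast CharP.cast_eq_zero F 2
  haveI : Fact (Nat.Prime 2) := ⟨Nat.prime_two⟩
  have hF : ∀ (i : ℕ) (a b : F), (a + b) ^ (2^i) = a ^ (2^i) + b ^ (2^i) :=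
    fun i a b => add_pow_char_pow ..
  have hmfix : ∀ t : F, t ^ (2^m) = t := by
    intro t; rw [← hcard]; exact FiniteField.pow_card t
  have key01 : ∀ (n : ℕ) (t : F), Nat.gcd n m = 1 → t ^ (2^n) = t → t = 0 ∨ t = 1 := by
    intro n t hg ht
    have h1 : t ^ (2^1) = t := by
      have := powfix_gcd t n m ht (hmfix t)
      rwa [hg] at this
    have : t * (t - 1) = 0 := by rw [pow_one] at h1; linear_combination h1
    rcases mul_eq_zero.mp this with h | h
    · exact Or.inl h
    · exact Or.inr (sub_eq_zero.mp h)
  refine ⟨by simp, ?_, ?_⟩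
  · -- condition (2)
    intro x y z hxy hxz hyz heq
    simp only [pow_succ, hF] at heq
    have hune : x + y ≠ 0 := by
      intro h; apply hxy
      have : x - y = 0 := by linear_combination h - y * h2
      exact sub_eq_zero.mp this
    have hvne : x + z ≠ 0 := by
      intro h; apply hxz
      have : x - z = 0 := by linear_combination h - z * h2
      exact sub_eq_zero.mp this
    have key : (x+y) ^ (2^s) * (x+z) + (x+y) * (x+z) ^ (2^s) = 0 := by
      simp only [hF]
      linear_combination -heq + x ^ (2^s) * x * h2
    have ht : ((x+y) * (x+z)⁻¹) ^ (2^s) = (x+y) * (x+z)⁻¹ := by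
      rw [mul_pow, inv_pow]
      field_simp
      linear_combination key - (x+y) * (x+z)^(2^s) * h2
    rcases key01 s _ hsm ht with h | h
    · rcases mul_eq_zero.mp h with h' | h'
      · exact hune h'
      · exact hvne (inv_eq_zero.mp h')
    · field_simp at h
      exact hyz (add_left_cancel h)
  · -- condition (3)
    intro x y z a ha heq
    simp only [pow_succ, hF] at heq
    have key : (x+y+z) ^ (2^s) * a + (x+y+z) * a ^ (2^s) + a ^ (2^s) * a = 0 := by
      simp only [hF]
      linear_combination -heq - a ^ (2^s) * a * h2
    have ht : ((x+y+z) * a⁻¹) ^ (2^s) = (x+y+z) * a⁻¹ + 1 := by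
      rw [mul_pow, inv_pow]
      field_simp
      linear_combination key - ((x+y+z) * a^(2^s) + a * a^(2^s)) * h2
    have ht2 : ((x+y+z) * a⁻¹) ^ (2^(2*s)) = (x+y+z) * a⁻¹ := by
      have he : (2:ℕ) ^ (2*s) = 2^s * 2^s := by rw [two_mul, pow_add]
      rw [he, pow_mul, ht, hF, ht, one_pow]
      linear_combination h2
    have hg2 : Nat.gcd (2*s) m = 1 := Nat.Coprime.mul (hmodd.coprime_two_left) hsm
    rcases key01 (2*s) _ hg2 ht2 with h | h
    · rw [h, zero_pow (by positivity)] at ht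
      exact one_ne_zero (by linear_combination -ht)
    · rw [h, one_pow] at ht
      exact one_ne_zero (by linear_combination ht + h2)

private lemma crooked_comp_frob {F : Type*} [Field F] [CharP F 2] (g : F → F) (j : ℕ)
    (hg : IsCrooked g) : IsCrooked (fun x : F => g (x ^ (2^j))) := by
  haveI : Fact (Nat.Prime 2) := ⟨Nat.prime_two⟩
  have hF : ∀ a b : F, (a + b) ^ (2^j) = a ^ (2^j) + b ^ (2^j) :=
    fun a b => add_pow_char_pow ..
  have hinj : ∀ a b : F, a ^ (2^j) = b ^ (2^j) → a = b := by
    intro a b hab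
    have h1 : (a - b) ^ (2^j) = 0 := by rw [sub_pow_char_pow, hab, sub_self]
    have h2 : a - b = 0 := by
      by_contra hne
      exact hne (pow_eq_zero_iff (n := 2^j) (by positivity) |>.mp h1)
    exact sub_eq_zero.mp h2
  obtain ⟨h0, hB, hC⟩ := hg
  refine ⟨by simpa using h0, ?_, ?_⟩
  · intro x y z hxy hxz hyz
    simp only [hF]
    exact hB _ _ _ (fun h => hxy (hinj _ _ h)) (fun h => hxz (hinj _ _ h))
      (fun h => hyz (hinj _ _ h))
  · intro x y z a ha
    simp only [hF]
    apply hC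
    intro h
    exact ha (hinj a 0 (by simpa using h))

theorem gold_is_crooked {m : ℕ} (hm : 0 < m) (hmodd : Odd m)
    {F : Type*} [Field F] [Fintype F] (hcard : Fintype.card F = 2 ^ m) :
    (∀ j k : ℕ, j < k → Nat.gcd (k - j) m = 1 →
      IsCrooked (fun x : F => x ^ (2 ^ k + 2 ^ j))) ∧
    (∀ k : ℕ, Nat.gcd k m = 1 → IsCrooked (fun x : F => x ^ (2 ^ k + 1))) := by
  obtain ⟨p, hc⟩ := CharP.exists F
  haveI := hc
  have hprime : p.Prime := CharP.char_is_prime F p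
  obtain ⟨n, hn, hcardp⟩ := FiniteField.card F p
  have hp2 : p = 2 := by
    have hdvd : p ∣ 2 ^ m := by
      rw [← hcard, hcardp]
      exact dvd_pow_self p (by positivity)
    have := hprime.dvd_of_dvd_pow hdvd
    exact (Nat.prime_dvd_prime_iff_eq hprime Nat.prime_two).mp this
  subst hp2
  constructor
  · intro j k hjk hg
    have hc2 := crooked_comp_frob (fun x : F => x ^ (2^(k-j) + 1)) j
      (gold_core hmodd hcard (k-j) hg)
    have hfun : (fun x : F => x ^ (2 ^ k + 2 ^ j))
        = fun x : F => (x ^ (2^j)) ^ (2^(k-j) + 1) := by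
      funext x
      rw [← pow_mul]
      congr 1
      rw [Nat.mul_add, ← pow_add, mul_one, Nat.add_sub_cancel' (le_of_lt hjk)]
    rw [hfun]
    exact hc2
  · intro k hk
    exact gold_core hmodd hcard k hk
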